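/- (Helical joint D-H parameterization, Lemma 1) For any normalized helical twist ξ̄ = (ω, v) with ‖ω‖ = 1 and pitch h = ωᵀv, there exist parameters θ, d, α, a such that for all q, exp(ξ̂̄ q) = H · R_Z(q) · T_Z(hq) · H⁻¹, where H = R_Z(θ)T_Z(d)R_X(α)T_X(a). -/

import Mathlib

open Matrix Real

noncomputable section

/-- Skew-symmetric matrix of a 3-vector. -/
def skew (w : Fin 3 → ℝ) : Matrix (Fin 3) (Fin 3) ℝ :=
  !![0, -w 2, w 1; w 2, 0, -w 0; -w 1, w 0, 0]

/-- 4×4 twist matrix of twist coordinates (ω, v). -/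
def twistM (w v : Fin 3 → ℝ) : Matrix (Fin 4) (Fin 4) ℝ :=
  !![0, -w 2, w 1, v 0;
     w 2, 0, -w 0, v 1;
     -w 1, w 0, 0, v 2;
     0, 0, 0, 0]

/-- Homogeneous transformation [[R,t],[0,1]]. -/
def homog (R : Matrix (Fin 3) (Fin 3) ℝ) (t : Fin 3 → ℝ) : Matrix (Fin 4) (Fin 4) ℝ :=
  !![R 0 0, R 0 1, R 0 2, t 0;
     R 1 0, R 1 1, R 1 2, t 1;
     R 2 0, R 2 1, R 2 2, t 2;
     0, 0, 0, 1]

def isSO3 (R : Matrix (Fin 3) (Fin 3) ℝ) : Prop := R * Rᵀ = 1 ∧ R.det = 1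

def isSE3 (H : Matrix (Fin 4) (Fin 4) ℝ) : Prop :=
  ∃ R t, isSO3 R ∧ H = homog R t

def isTwist (X : Matrix (Fin 4) (Fin 4) ℝ) : Prop := ∃ w v, X = twistM w v

def RZ (θ : ℝ) : Matrix (Fin 4) (Fin 4) ℝ :=
  homog !![Real.cos θ, -Real.sin θ, 0; Real.sin θ, Real.cos θ, 0; 0, 0, 1] ![0, 0, 0]

def TZ (d : ℝ) : Matrix (Fin 4) (Fin 4) ℝ := homog 1 ![0, 0, d]

def RX (α : ℝ) : Matrix (Fin 4) (Fin 4) ℝ :=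
  homog !![1, 0, 0; 0, Real.cos α, -Real.sin α; 0, Real.sin α, Real.cos α] ![0, 0, 0]

def TX (a : ℝ) : Matrix (Fin 4) (Fin 4) ℝ := homog 1 ![a, 0, 0]

/-! ### Auxiliary lemmas -/

lemma aux_exp_sq_zero {X : Matrix (Fin 4) (Fin 4) ℝ} (hX : X * X = 0) :
    NormedSpace.exp X = 1 + X := by
  letI : SeminormedRing (Matrix (Fin 4) (Fin 4) ℝ) := Matrix.linftyOpSemiNormedRing
  letI : NormedRing (Matrix (Fin 4) (Fin 4) ℝ) := Matrix.linftyOpNormedRing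
  letI : NormedAlgebra ℝ (Matrix (Fin 4) (Fin 4) ℝ) := Matrix.linftyOpNormedAlgebra
  rw [NormedSpace.exp_eq_tsum ℝ]
  show (∑' n : ℕ, ((n.factorial : ℝ))⁻¹ • X ^ n) = 1 + X
  have hpow : ∀ n : ℕ, X ^ (n + 2) = 0 := by
    intro n
    rw [pow_add, pow_two, hX, mul_zero]
  rw [tsum_eq_sum (s := ({0, 1} : Finset ℕ)) ?_]
  · norm_num [Finset.sum_pair]
  · intro n hn
    match n, hn with
    | (n+2), _ => rw [hpow]; simp

def auxPhi : ℂ × ℝ →ₐ[ℝ] Matrix (Fin 4) (Fin 4) ℝ where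
  toFun p := !![p.1.re, -p.1.im, 0, 0; p.1.im, p.1.re, 0, 0; 0, 0, p.2, 0; 0, 0, 0, p.2]
  map_one' := by
    ext i j
    fin_cases i <;> fin_cases j <;> simp [Matrix.one_apply, Matrix.vecHead, Matrix.vecTail]
  map_mul' p q := by
    ext i j
    fin_cases i <;> fin_cases j <;>
      simp [Matrix.mul_apply, Fin.sum_univ_four, Complex.mul_re, Complex.mul_im,
        Matrix.vecHead, Matrix.vecTail] <;> ring
  map_zero' := by
    ext i j
    fin_cases i <;> fin_cases j <;> simp [Matrix.vecHead, Matrix.vecTail]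
  map_add' p q := by
    ext i j
    fin_cases i <;> fin_cases j <;>
      simp [Complex.add_re, Complex.add_im, Matrix.vecHead, Matrix.vecTail] <;> ring
  commutes' r := by
    ext i j
    fin_cases i <;> fin_cases j <;>
      simp [Matrix.algebraMap_eq_diagonal, Matrix.diagonal_apply,
        Algebra.algebraMap_eq_smul_one, Matrix.vecHead, Matrix.vecTail]

lemma auxPhi_cont : Continuous auxPhi := auxPhi.toLinearMap.continuous_of_finiteDimensional

lemma aux_exp_rot (q : ℝ) :
    NormedSpace.exp (!![0, -q, 0, 0; q, 0, 0, 0; 0, 0, 0, 0; 0, 0, 0, 0] :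
      Matrix (Fin 4) (Fin 4) ℝ) = RZ q := by
  letI : SeminormedRing (Matrix (Fin 4) (Fin 4) ℝ) := Matrix.linftyOpSemiNormedRing
  letI : NormedRing (Matrix (Fin 4) (Fin 4) ℝ) := Matrix.linftyOpNormedRing
  letI : NormedAlgebra ℝ (Matrix (Fin 4) (Fin 4) ℝ) := Matrix.linftyOpNormedAlgebra
  have h1 : (!![0, -q, 0, 0; q, 0, 0, 0; 0, 0, 0, 0; 0, 0, 0, 0] :
      Matrix (Fin 4) (Fin 4) ℝ) = auxPhi ((q : ℂ) * Complex.I, (0 : ℝ)) := by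
    ext i j
    fin_cases i <;> fin_cases j <;> simp [auxPhi]
  erw [h1, ← NormedSpace.map_exp auxPhi auxPhi_cont]
  have h2 : NormedSpace.exp (((q : ℂ) * Complex.I, (0 : ℝ)) : ℂ × ℝ) =
      (Complex.cos q + Complex.sin q * Complex.I, 1) := by
    apply Prod.ext
    · rw [Prod.fst_exp]
      show NormedSpace.exp ((q : ℂ) * Complex.I) = _
      rw [← Complex.exp_eq_exp_ℂ]
      exact Complex.exp_mul_I _
    · rw [Prod.snd_exp]
      simpa using NormedSpace.exp_zero (𝔸 := ℝ)
  rw [h2]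
  ext i j
  fin_cases i <;> fin_cases j <;>
    simp [auxPhi, RZ, homog, Complex.add_re, Complex.add_im, Complex.cos_ofReal_re,
      Complex.sin_ofReal_re, Matrix.vecHead, Matrix.vecTail]

lemma aux_exp_std (h q : ℝ) :
    NormedSpace.exp (q • twistM ![0,0,1] ![0,0,h]) = RZ q * TZ (h*q) := by
  have hAB : q • twistM ![0,0,1] ![0,0,h] =
      !![0, -q, 0, 0; q, 0, 0, 0; 0, 0, 0, 0; 0, 0, 0, 0] +
      !![0, 0, 0, 0; 0, 0, 0, 0; 0, 0, 0, h*q; 0, 0, 0, 0] := by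
    ext i j
    fin_cases i <;> fin_cases j <;>
      simp [twistM, Matrix.vecHead, Matrix.vecTail] <;> ring
  have hcomm : Commute
      (!![0, -q, 0, 0; q, 0, 0, 0; 0, 0, 0, 0; 0, 0, 0, 0] : Matrix (Fin 4) (Fin 4) ℝ)
      (!![0, 0, 0, 0; 0, 0, 0, 0; 0, 0, 0, h*q; 0, 0, 0, 0]) := by
    show _ * _ = _ * _
    ext i j
    fin_cases i <;> fin_cases j <;>
      simp [Matrix.mul_apply, Fin.sum_univ_four, Matrix.vecHead, Matrix.vecTail]
  have hB2 : (!![0, 0, 0, 0; 0, 0, 0, 0; 0, 0, 0, h*q; 0, 0, 0, 0] :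
      Matrix (Fin 4) (Fin 4) ℝ) *
      !![0, 0, 0, 0; 0, 0, 0, 0; 0, 0, 0, h*q; 0, 0, 0, 0] = 0 := by
    ext i j
    fin_cases i <;> fin_cases j <;>
      simp [Matrix.mul_apply, Fin.sum_univ_four, Matrix.vecHead, Matrix.vecTail]
  rw [hAB, Matrix.exp_add_of_commute _ _ hcomm, aux_exp_rot, aux_exp_sq_zero hB2]
  congr 1
  ext i j
  fin_cases i <;> fin_cases j <;>
    simp [TZ, homog, Matrix.one_apply, Matrix.vecHead, Matrix.vecTail]

lemma aux_RZ_TZ (θ d : ℝ) : RZ θ * TZ d =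
    !![Real.cos θ, -Real.sin θ, 0, 0; Real.sin θ, Real.cos θ, 0, 0; 0, 0, 1, d; 0, 0, 0, 1] := by
  ext i j
  fin_cases i <;> fin_cases j <;>
    simp [RZ, TZ, homog, Matrix.mul_apply, Fin.sum_univ_four, Matrix.one_apply,
      Matrix.vecHead, Matrix.vecTail]

lemma aux_RX_TX (α a : ℝ) : RX α * TX a =
    !![1, 0, 0, a; 0, Real.cos α, -Real.sin α, 0; 0, Real.sin α, Real.cos α, 0; 0, 0, 0, 1] := by
  ext i j
  fin_cases i <;> fin_cases j <;>
    simp [RX, TX, homog, Matrix.mul_apply, Fin.sum_univ_four, Matrix.one_apply,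
      Matrix.vecHead, Matrix.vecTail]

lemma aux_DH_eq (θ d α a : ℝ) : RZ θ * TZ d * RX α * TX a =
    !![Real.cos θ, -Real.sin θ * Real.cos α, Real.sin θ * Real.sin α, a * Real.cos θ;
       Real.sin θ, Real.cos θ * Real.cos α, -(Real.cos θ * Real.sin α), a * Real.sin θ;
       0, Real.sin α, Real.cos α, d;
       0, 0, 0, 1] := by
  rw [mul_assoc (RZ θ * TZ d), aux_RZ_TZ, aux_RX_TX]
  ext i j
  fin_cases i <;> fin_cases j <;>
    simp [Matrix.mul_apply, Fin.sum_univ_four, Matrix.vecHead, Matrix.vecTail] <;> ring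

lemma aux_twist_conj (θ α d a h : ℝ) (ω v : Fin 3 → ℝ)
    (h0 : ω 0 = Real.sin θ * Real.sin α)
    (h1 : ω 1 = -(Real.cos θ * Real.sin α))
    (h2 : ω 2 = Real.cos α)
    (e1 : -(Real.cos α)*(a*Real.sin θ) + (-(Real.cos θ*Real.sin α))*d + v 0
        = h * (Real.sin θ*Real.sin α))
    (e2 : Real.cos α*(a*Real.cos θ) - (Real.sin θ*Real.sin α)*d + v 1
        = h * (-(Real.cos θ*Real.sin α)))
    (e3 : (Real.cos θ*Real.sin α)*(a*Real.cos θ) + (Real.sin θ*Real.sin α)*(a*Real.sin θ) + v 2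
        = h * Real.cos α) :
    twistM ω v * (RZ θ * TZ d * RX α * TX a) =
      (RZ θ * TZ d * RX α * TX a) * twistM ![0,0,1] ![0,0,h] := by
  rw [aux_DH_eq]
  ext i j
  fin_cases i <;> fin_cases j <;>
    simp [twistM, Matrix.mul_apply, Fin.sum_univ_four,
      Matrix.vecHead, Matrix.vecTail, h0, h1, h2] <;>
    (first
      | ring1
      | linear_combination e1
      | linear_combination e2
      | linear_combination e3
      | linear_combination (Real.sin α) * Real.sin_sq_add_cos_sq θ
      | linear_combination (-(Real.cos θ)) * Real.sin_sq_add_cos_sq α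
      | linear_combination (-(Real.sin θ)) * Real.sin_sq_add_cos_sq α)

lemma aux_isUnit_of_right_inv {A B : Matrix (Fin 4) (Fin 4) ℝ} (hh : A * B = 1) : IsUnit A :=
  ⟨⟨A, B, hh, mul_eq_one_comm.mp hh⟩, rfl⟩

lemma aux_RZ_inv (θ : ℝ) : RZ θ * RZ (-θ) = 1 := by
  ext i j
  fin_cases i <;> fin_cases j <;>
    simp [RZ, homog, Matrix.mul_apply, Fin.sum_univ_four, Matrix.one_apply,
      Real.cos_neg, Real.sin_neg, Matrix.vecHead, Matrix.vecTail] <;>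
    (first | ring1 | linear_combination Real.sin_sq_add_cos_sq θ)

lemma aux_RX_inv (α : ℝ) : RX α * RX (-α) = 1 := by
  ext i j
  fin_cases i <;> fin_cases j <;>
    simp [RX, homog, Matrix.mul_apply, Fin.sum_univ_four, Matrix.one_apply,
      Real.cos_neg, Real.sin_neg, Matrix.vecHead, Matrix.vecTail] <;>
    (first | ring1 | linear_combination Real.sin_sq_add_cos_sq α)

lemma aux_TZ_inv (d : ℝ) : TZ d * TZ (-d) = 1 := by
  ext i j
  fin_cases i <;> fin_cases j <;>
    simp [TZ, homog, Matrix.mul_apply, Fin.sum_univ_four, Matrix.one_apply,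
      Matrix.vecHead, Matrix.vecTail]

lemma aux_TX_inv (a : ℝ) : TX a * TX (-a) = 1 := by
  ext i j
  fin_cases i <;> fin_cases j <;>
    simp [TX, homog, Matrix.mul_apply, Fin.sum_univ_four, Matrix.one_apply,
      Matrix.vecHead, Matrix.vecTail]

lemma aux_isUnit_H (θ d α a : ℝ) : IsUnit (RZ θ * TZ d * RX α * TX a) := by
  have u1 := aux_isUnit_of_right_inv (aux_RZ_inv θ)
  have u2 := aux_isUnit_of_right_inv (aux_TZ_inv d)
  have u3 := aux_isUnit_of_right_inv (aux_RX_inv α)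
  have u4 := aux_isUnit_of_right_inv (aux_TX_inv a)
  exact ((u1.mul u2).mul u3).mul u4

lemma aux_main_of_params (ω v : Fin 3 → ℝ) (h θ d α a : ℝ)
    (h0 : ω 0 = Real.sin θ * Real.sin α)
    (h1 : ω 1 = -(Real.cos θ * Real.sin α))
    (h2 : ω 2 = Real.cos α)
    (e1 : -(Real.cos α)*(a*Real.sin θ) + (-(Real.cos θ*Real.sin α))*d + v 0
        = h * (Real.sin θ*Real.sin α))
    (e2 : Real.cos α*(a*Real.cos θ) - (Real.sin θ*Real.sin α)*d + v 1
        = h * (-(Real.cos θ*Real.sin α)))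
    (e3 : (Real.cos θ*Real.sin α)*(a*Real.cos θ) + (Real.sin θ*Real.sin α)*(a*Real.sin θ) + v 2
        = h * Real.cos α) :
    ∀ q : ℝ,
      NormedSpace.exp (q • twistM ω v) =
        (RZ θ * TZ d * RX α * TX a) * (RZ q * TZ (h * q)) *
          (RZ θ * TZ d * RX α * TX a)⁻¹ := by
  intro q
  set H := RZ θ * TZ d * RX α * TX a with hH
  have hunit : IsUnit H := aux_isUnit_H θ d α a
  have hdet : IsUnit H.det := (Matrix.isUnit_iff_isUnit_det H).mp hunit
  have hkey : twistM ω v * H = H * twistM ![0,0,1] ![0,0,h] :=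
    aux_twist_conj θ α d a h ω v h0 h1 h2 e1 e2 e3
  have hM : twistM ω v = H * twistM ![0,0,1] ![0,0,h] * H⁻¹ := by
    rw [← hkey, Matrix.mul_assoc, Matrix.mul_nonsing_inv _ hdet, Matrix.mul_one]
  have hq : q • twistM ω v = H * (q • twistM ![0,0,1] ![0,0,h]) * H⁻¹ := by
    rw [hM, Matrix.mul_smul, Matrix.smul_mul]
  rw [hq, Matrix.exp_conj H _ hunit, aux_exp_std]

/-- Lemma 1: D-H parameterization of a helical joint twist. -/
theorem helical_joint_DH (ω v : Fin 3 → ℝ)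
    (hω : Real.sqrt (ω 0 ^ 2 + ω 1 ^ 2 + ω 2 ^ 2) = 1)
    (h : ℝ) (hpitch : h = ω ⬝ᵥ v) :
    ∃ θ d α a : ℝ,
      ∀ q : ℝ,
        NormedSpace.exp (q • twistM ω v) =
          (RZ θ * TZ d * RX α * TX a) * (RZ q * TZ (h * q)) *
            (RZ θ * TZ d * RX α * TX a)⁻¹ := by
  have hsum : ω 0 ^ 2 + ω 1 ^ 2 + ω 2 ^ 2 = 1 := by
    have h1 : Real.sqrt (ω 0 ^ 2 + ω 1 ^ 2 + ω 2 ^ 2) ^ 2 = 1 := by rw [hω]; norm_num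
    rwa [Real.sq_sqrt (by positivity)] at h1
  have hub : ω 2 ^ 2 ≤ 1 := by nlinarith [sq_nonneg (ω 0), sq_nonneg (ω 1)]
  have h2le : -1 ≤ ω 2 := by nlinarith [sq_nonneg (ω 2 + 1)]
  have h2ge : ω 2 ≤ 1 := by nlinarith [sq_nonneg (ω 2 - 1)]
  have hdot : h = ω 0 * v 0 + ω 1 * v 1 + ω 2 * v 2 := by
    simpa [dotProduct, Fin.sum_univ_three] using hpitch
  set α := Real.arccos (ω 2) with hα
  have hcos : Real.cos α = ω 2 := Real.cos_arccos h2le h2ge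
  have hsin : Real.sin α = Real.sqrt (1 - ω 2 ^ 2) := by rw [hα]; exact Real.sin_arccos _
  by_cases hcase : ω 2 ^ 2 = 1
  · -- degenerate case : ω = (0, 0, ±1)
    have h00 : ω 0 = 0 := by nlinarith [sq_nonneg (ω 0), sq_nonneg (ω 1)]
    have h10 : ω 1 = 0 := by nlinarith [sq_nonneg (ω 0), sq_nonneg (ω 1)]
    have hsin0 : Real.sin α = 0 := by rw [hsin, hcase]; simp
    set z : ℂ := ⟨-(ω 2 * v 1), ω 2 * v 0⟩ with hz
    set θ := Complex.arg z with hθ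
    set a := ‖z‖ with ha
    have hc : a * Real.cos θ = -(ω 2 * v 1) := Complex.norm_mul_cos_arg z
    have hsn : a * Real.sin θ = ω 2 * v 0 := Complex.norm_mul_sin_arg z
    refine ⟨θ, 0, α, a, aux_main_of_params ω v h θ 0 α a ?_ ?_ ?_ ?_ ?_ ?_⟩
    · rw [hsin0]; simpa using h00
    · rw [hsin0]; simpa using h10
    · rw [hcos]
    · rw [hsin0, hcos]
      linear_combination (-(ω 2)) * hsn + (-(v 0)) * hcase
    · rw [hsin0, hcos]
      linear_combination (ω 2) * hc + (-(v 1)) * hcase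
    · rw [hsin0, hcos]
      linear_combination (-(ω 2)) * hdot + (-(ω 2 * v 0)) * h00 + (-(ω 2 * v 1)) * h10
        + (-(v 2)) * hcase
  · -- generic case
    have hspos : (0:ℝ) < 1 - ω 2 ^ 2 := lt_of_le_of_ne (by linarith) (by intro hcon; exact hcase (by linarith))
    set s := Real.sqrt (1 - ω 2 ^ 2) with hs
    have hs2 : s ^ 2 = 1 - ω 2 ^ 2 := Real.sq_sqrt (le_of_lt hspos)
    have hsne : s ≠ 0 := by positivity
    have hsinα : Real.sin α = s := hsin
    set z : ℂ := ⟨-(ω 1) / s, ω 0 / s⟩ with hz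
    have habs : ‖z‖ = 1 := by
      rw [Complex.norm_def, Complex.normSq_mk]
      rw [show -(ω 1) / s * (-(ω 1) / s) + ω 0 / s * (ω 0 / s) = 1 by
        field_simp
        nlinarith [hs2, hsum]]
      exact Real.sqrt_one
    set θ := Complex.arg z with hθ
    have hc : Real.cos θ = -(ω 1) / s := by
      have := Complex.norm_mul_cos_arg z
      rwa [habs, one_mul] at this
    have hsn : Real.sin θ = ω 0 / s := by
      have := Complex.norm_mul_sin_arg z
      rwa [habs, one_mul] at this
    set a := (h * ω 2 - v 2) / s with haa
    set d := (ω 1 * (h * ω 0 - v 0) - ω 0 * (h * ω 1 - v 1)) / s ^ 2 with hd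
    have horth : ω 0 * (h * ω 0 - v 0) + ω 1 * (h * ω 1 - v 1) + ω 2 * (h * ω 2 - v 2) = 0 := by
      linear_combination h * hsum + hdot
    refine ⟨θ, d, α, a, aux_main_of_params ω v h θ d α a ?_ ?_ ?_ ?_ ?_ ?_⟩
    · rw [hsinα, hsn]; field_simp
    · rw [hsinα, hc]; field_simp
    · rw [hcos]
    · rw [hsinα, hcos, hc, hsn, haa, hd]
      field_simp
      linear_combination ((v 0 - h * ω 0) * (s ^ 2 + 1 - ω 2 ^ 2)
          + (-(ω 2 * ω 0 * (h * ω 2 - v 2)) + ω 1 ^ 2 * (h * ω 0 - v 0)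
            - ω 1 * ω 0 * (h * ω 1 - v 1))) * hs2
        + (-(1 - ω 2 ^ 2) * v 0) * hsum + (-(1 - ω 2 ^ 2) * ω 0) * hdot
          + (1 - s ^ 2) * (v 0 - h * ω 0) * hs2 + (1 - s ^ 2) * (-(v 0)) * hsum
          + (1 - s ^ 2) * (-(ω 0)) * hdot
    · rw [hsinα, hcos, hc, hsn, haa, hd]
      field_simp
      linear_combination ((v 1 - h * ω 1) * (s ^ 2 + 1 - ω 2 ^ 2)
          + (-(ω 2 * ω 1 * (h * ω 2 - v 2)) - ω 0 * ω 1 * (h * ω 0 - v 0)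
            + ω 0 ^ 2 * (h * ω 1 - v 1))) * hs2
        + (-(1 - ω 2 ^ 2) * v 1) * hsum + (-(1 - ω 2 ^ 2) * ω 1) * hdot
          + (1 - s ^ 2) * (v 1 - h * ω 1) * hs2 + (1 - s ^ 2) * (-(v 1)) * hsum
          + (1 - s ^ 2) * (-(ω 1)) * hdot
    · rw [hsinα, hcos, hc, hsn, haa]
      field_simp
      linear_combination (-(s ^ 3) * (h * ω 2 - v 2)) * hs2
        + (s ^ 3 * (h * ω 2 - v 2)) * hsum
        + (1 - s ^ 3) * (h * ω 2 - v 2) * hsum - (1 - s ^ 3) * (h * ω 2 - v 2) * hs2
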